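/- arXiv:2405.09696 — 4 statements merged into one kernel-verified Lean document; each statement's English description precedes it below -/
import Mathlib

section
/- The pushforward of the uniform probability measure on the unit circle under the Möbius map g(z) = (e^{iψ} z + α)/(1 + conj(α) e^{iψ} z), with |α| < 1, has density (with respect to normalized arclength) equal to the Poisson kernel (1 − |α|²)/|e^{iφ} − α|² at the point e^{iφ} (times 1/(2π) with respect to dφ). -/
open MeasureTheory Complex Real Set
open scoped ENNReal

noncomputable def mobius (ψ : ℝ) (α : ℂ) (z : ℂ) : ℂ :=
  (Complex.exp (ψ * Complex.I) * z + α) / (1 + (starRingEnd ℂ) α * Complex.exp (ψ * Complex.I) * z)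

/-- The uniform (normalized arclength) probability measure on the unit circle in ℂ,
realized as the pushforward of normalized Lebesgue measure on [0,2π) under φ ↦ e^{iφ}. -/
noncomputable def uniformCircle : Measure ℂ :=
  Measure.map (fun φ : ℝ => Complex.exp (φ * Complex.I))
    ((ENNReal.ofReal (2 * π))⁻¹ • volume.restrict (Set.Ico 0 (2 * π)))

/-- The probability measure on the circle with Poisson-kernel density
(1/(2π)) (1−|α|²)/|e^{iφ}−α|² with respect to dφ. -/
noncomputable def poissonMeasure (α : ℂ) : Measure ℂ :=
  Measure.map (fun φ : ℝ => Complex.exp (φ * Complex.I))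
    ((volume.restrict (Set.Ico 0 (2 * π))).withDensity
      (fun φ => ENNReal.ofReal
        ((1 / (2 * π)) * (1 - ‖α‖ ^ 2) /
          ‖Complex.exp (φ * Complex.I) - α‖ ^ 2)))

namespace PoissonProof

noncomputable def DD (ψ : ℝ) (α : ℂ) (φ : ℝ) : ℂ :=
  1 + (starRingEnd ℂ) α * Complex.exp (ψ * Complex.I) * Complex.exp (φ * Complex.I)

noncomputable def th (ψ : ℝ) (α : ℂ) (φ : ℝ) : ℝ :=
  ψ + φ - 2 * (Complex.log (DD ψ α φ)).im

lemma abs_term (ψ : ℝ) (α : ℂ) (φ : ℝ) :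
    ‖(starRingEnd ℂ) α * Complex.exp (ψ * Complex.I) * Complex.exp (φ * Complex.I)‖
      = ‖α‖ := by
  simp [Complex.norm_exp]

lemma DD_re_pos {α : ℂ} (hα : ‖α‖ < 1) (ψ φ : ℝ) : 0 < (DD ψ α φ).re := by
  have h1 := abs_term ψ α φ
  have h2 := Complex.abs_re_le_norm
    ((starRingEnd ℂ) α * Complex.exp (ψ * Complex.I) * Complex.exp (φ * Complex.I))
  rw [h1] at h2
  have h3 := abs_le.mp h2
  simp only [DD, Complex.add_re, Complex.one_re]
  linarith [h3.1]

lemma DD_ne {α : ℂ} (hα : ‖α‖ < 1) (ψ φ : ℝ) : DD ψ α φ ≠ 0 := by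
  intro h
  have := DD_re_pos hα ψ φ
  rw [h] at this
  simp at this

lemma DD_slit {α : ℂ} (hα : ‖α‖ < 1) (ψ φ : ℝ) : DD ψ α φ ∈ Complex.slitPlane :=
  Or.inl (DD_re_pos hα ψ φ)

lemma exp_th {α : ℂ} (hα : ‖α‖ < 1) (ψ φ : ℝ) :
    Complex.exp (th ψ α φ * Complex.I)
      = Complex.exp (ψ * Complex.I) * Complex.exp (φ * Complex.I)
          * (starRingEnd ℂ) (DD ψ α φ) / DD ψ α φ := by
  have hD := DD_ne hα ψ φ
  have harg : ((th ψ α φ : ℂ) * Complex.I)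
      = ψ * Complex.I + φ * Complex.I
        + ((starRingEnd ℂ) (Complex.log (DD ψ α φ)) - Complex.log (DD ψ α φ)) := by
    have h1 : Complex.log (DD ψ α φ) - (starRingEnd ℂ) (Complex.log (DD ψ α φ))
        = (2 * (Complex.log (DD ψ α φ)).im : ℝ) * Complex.I := Complex.sub_conj _
    have h2 : (starRingEnd ℂ) (Complex.log (DD ψ α φ)) - Complex.log (DD ψ α φ)
        = -((2 * (Complex.log (DD ψ α φ)).im : ℝ) * Complex.I) := by rw [← h1]; ring
    rw [h2, th]
    push_cast
    ring
  rw [harg, Complex.exp_add, Complex.exp_add, Complex.exp_sub, Complex.exp_conj,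
    Complex.exp_log hD]
  ring

lemma key_conj (α : ℂ) (ψ φ : ℝ) :
    Complex.exp (ψ * Complex.I) * Complex.exp (φ * Complex.I) * (starRingEnd ℂ) (DD ψ α φ)
      = Complex.exp (ψ * Complex.I) * Complex.exp (φ * Complex.I) + α := by
  have e1 : (starRingEnd ℂ) (Complex.exp (ψ * Complex.I)) = Complex.exp (-(ψ * Complex.I)) := by
    rw [← Complex.exp_conj]; congr 1; simp
  have e2 : (starRingEnd ℂ) (Complex.exp (φ * Complex.I)) = Complex.exp (-(φ * Complex.I)) := by
    rw [← Complex.exp_conj]; congr 1; simp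
  simp only [DD, map_add, map_one, map_mul, Complex.conj_conj, e1, e2]
  rw [Complex.exp_neg, Complex.exp_neg]
  field_simp [Complex.exp_ne_zero]

lemma mobius_exp {α : ℂ} (hα : ‖α‖ < 1) (ψ φ : ℝ) :
    mobius ψ α (Complex.exp (φ * Complex.I)) = Complex.exp (th ψ α φ * Complex.I) := by
  rw [exp_th hα, mobius, mul_div_assoc, ← key_conj α ψ φ, mul_div_assoc, DD]

lemma th_periodic (ψ : ℝ) (α : ℂ) (φ : ℝ) : th ψ α (φ + 2 * π) = th ψ α φ + 2 * π := by
  have h : Complex.exp ((φ + 2 * π : ℝ) * Complex.I) = Complex.exp (φ * Complex.I) := by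
    push_cast
    rw [add_mul, Complex.exp_add, Complex.exp_two_pi_mul_I, mul_one]
  simp only [th, DD, h]
  ring

lemma exp_th_sub {α : ℂ} (hα : ‖α‖ < 1) (ψ φ : ℝ) :
    Complex.exp (th ψ α φ * Complex.I) - α
      = ((1 - ‖α‖ ^ 2 : ℝ) : ℂ) * (Complex.exp (ψ * Complex.I)
          * Complex.exp (φ * Complex.I)) / DD ψ α φ := by
  have hD := DD_ne hα ψ φ
  rw [exp_th hα, eq_div_iff hD, sub_mul, mul_comm (Complex.exp (ψ * Complex.I)
    * Complex.exp (φ * Complex.I) * (starRingEnd ℂ) (DD ψ α φ) / DD ψ α φ) (DD ψ α φ),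
    mul_div_cancel₀ _ hD, key_conj α ψ φ]
  have hns : ((‖α‖ : ℂ)) ^ 2 = (starRingEnd ℂ) α * α := by
    rw [← Complex.normSq_eq_conj_mul_self, ← Complex.sq_norm]
    push_cast
    ring
  push_cast
  rw [hns, DD]
  ring

lemma abs_exp_th_sub {α : ℂ} (hα : ‖α‖ < 1) (ψ φ : ℝ) :
    ‖Complex.exp (th ψ α φ * Complex.I) - α‖ ^ 2
      = (1 - ‖α‖ ^ 2) ^ 2 / Complex.normSq (DD ψ α φ) := by
  have h1 : (0:ℝ) < 1 - ‖α‖ ^ 2 := by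
    have := norm_nonneg α
    nlinarith
  rw [exp_th_sub hα, norm_div, norm_mul, norm_mul, Complex.norm_real, Real.norm_eq_abs,
    Complex.norm_exp, Complex.norm_exp, abs_of_pos h1]
  simp only [Complex.mul_I_re, Complex.ofReal_im, neg_zero, Real.exp_zero, mul_one]
  rw [div_pow, Complex.sq_norm, Complex.sq_norm]

lemma hasDerivAt_th {α : ℂ} (hα : ‖α‖ < 1) (ψ φ : ℝ) :
    HasDerivAt (th ψ α)
      ((1 - ‖α‖ ^ 2) / Complex.normSq (DD ψ α φ)) φ := by
  set c : ℂ := (starRingEnd ℂ) α * Complex.exp (ψ * Complex.I) with hc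
  have hexp : HasDerivAt (fun φ : ℝ => Complex.exp (φ * Complex.I))
      (Complex.exp (φ * Complex.I) * Complex.I) φ := by
    have h0 : HasDerivAt (fun φ : ℝ => (φ : ℂ) * Complex.I) Complex.I φ := by
      simpa using (Complex.ofRealCLM.hasDerivAt (x := φ)).mul_const Complex.I
    exact h0.cexp
  have hD : HasDerivAt (fun t => DD ψ α t) (c * (Complex.exp (φ * Complex.I) * Complex.I)) φ := by
    simpa [DD, hc, mul_assoc] using ((hexp.const_mul c).const_add 1)
  have hlog : HasDerivAt (fun t => Complex.log (DD ψ α t))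
      (c * (Complex.exp (φ * Complex.I) * Complex.I) / DD ψ α φ) φ :=
    hD.clog_real (DD_slit hα ψ φ)
  have him : HasDerivAt (fun t => (Complex.log (DD ψ α t)).im)
      ((c * (Complex.exp (φ * Complex.I) * Complex.I) / DD ψ α φ).im) φ := by
    exact (Complex.imCLM.hasFDerivAt.comp_hasDerivAt φ hlog)
  have hth : HasDerivAt (th ψ α)
      (1 - 2 * (c * (Complex.exp (φ * Complex.I) * Complex.I) / DD ψ α φ).im) φ := by
    exact (((hasDerivAt_id φ).const_add ψ).sub (him.const_mul 2))
  convert hth using 1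
  set w : ℂ := c * Complex.exp (φ * Complex.I) with hw
  have hDw : DD ψ α φ = 1 + w := by simp only [DD, hw, hc, mul_assoc]
  have hnsw : Complex.normSq w = ‖α‖ ^ 2 := by
    rw [← Complex.sq_norm]
    congr 1
    rw [hw, hc, mul_assoc]
    simpa [mul_assoc] using abs_term ψ α φ
  have hns_pos : 0 < Complex.normSq (DD ψ α φ) := by
    rw [Complex.normSq_pos]; exact DD_ne hα ψ φ
  have h3 : c * (Complex.exp (φ * Complex.I) * Complex.I) = w * Complex.I := by
    rw [hw]; ring
  rw [h3, hDw, Complex.div_im]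
  simp only [Complex.mul_I_im, Complex.mul_I_re, Complex.add_re, Complex.one_re,
    Complex.add_im, Complex.one_im, zero_add]
  have hN : Complex.normSq (1 + w) = (1 + w.re) ^ 2 + w.im ^ 2 := by
    simp [Complex.normSq_apply]; ring
  have hNw : Complex.normSq w = w.re ^ 2 + w.im ^ 2 := by
    simp [Complex.normSq_apply]; ring
  have hpos : (0:ℝ) < Complex.normSq (1 + w) := hDw ▸ hns_pos
  rw [hN] at hpos
  rw [← hnsw, hNw, hN]
  field_simp
  ring

lemma lintegral_image_eq_lintegral_abs_deriv_mul' {s : Set ℝ} {f f' : ℝ → ℝ}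
    (hs : MeasurableSet s) (hf' : ∀ x ∈ s, HasDerivWithinAt f (f' x) s x)
    (hf : Set.InjOn f s) (g : ℝ → ℝ≥0∞) :
    ∫⁻ x in f '' s, g x = ∫⁻ x in s, ENNReal.ofReal |f' x| * g (f x) := by
  simpa only [ContinuousLinearMap.det_toSpanSingleton] using
    lintegral_image_eq_lintegral_abs_det_fderiv_mul volume hs
      (fun x hx => (hf' x hx).hasFDerivWithinAt) hf g

lemma map_withDensity_comp {X Y : Type*} [MeasurableSpace X] [MeasurableSpace Y]
    (μ : Measure X) {f : X → Y} (hf : Measurable f) {g : Y → ℝ≥0∞} (hg : Measurable g) :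
    Measure.map f (μ.withDensity (g ∘ f)) = (Measure.map f μ).withDensity g := by
  ext s hs
  rw [Measure.map_apply hf hs, withDensity_apply _ hs, withDensity_apply _ (hf hs),
    setLIntegral_map hs hg hf]
  rfl

end PoissonProof

open PoissonProof

theorem pushforward_uniform_is_poisson (ψ : ℝ) (α : ℂ) (hα : ‖α‖ < 1) :
    Measure.map (mobius ψ α) uniformCircle = poissonMeasure α := by
  haveI : Fact (0 < 2 * π) := ⟨by positivity⟩
  have hπ : (0:ℝ) < 2 * π := by positivity
  have h1α : (0:ℝ) < 1 - ‖α‖ ^ 2 := by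
    have := norm_nonneg α
    nlinarith
  set p : ℝ → ℝ≥0∞ := fun φ => ENNReal.ofReal
      ((1 / (2 * π)) * (1 - ‖α‖ ^ 2) /
        ‖Complex.exp (φ * Complex.I) - α‖ ^ 2) with hp_def
  -- continuity of the density
  have hp_cont : Continuous p := by
    apply ENNReal.continuous_ofReal.comp
    apply Continuous.div continuous_const
    · exact ((continuous_norm.comp
        ((Complex.continuous_exp.comp (Complex.continuous_ofReal.mul continuous_const)).sub
          continuous_const)).pow 2)
    · intro x
      have hne : Complex.exp (x * Complex.I) - α ≠ 0 := by
        intro h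
        have h2 : ‖Complex.exp (x * Complex.I)‖ = 1 := by
          simp [Complex.norm_exp]
        rw [sub_eq_zero] at h
        rw [h] at h2
        rw [h2] at hα
        exact lt_irrefl _ hα
      exact pow_ne_zero 2 (norm_ne_zero_iff.mpr hne)
  have hp_meas : Measurable p := hp_cont.measurable
  -- periodicity of the density
  have hp_per : Function.Periodic p (2 * π) := by
    intro x
    have h : Complex.exp ((x + 2 * π : ℝ) * Complex.I) = Complex.exp (x * Complex.I) := by
      push_cast
      rw [add_mul, Complex.exp_add, Complex.exp_two_pi_mul_I, mul_one]
    simp only [hp_def, h]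
  -- continuity & measurability facts
  have hth_cont : Continuous (th ψ α) :=
    continuous_iff_continuousAt.mpr fun φ => (hasDerivAt_th hα ψ φ).continuousAt
  have hth_meas : Measurable (th ψ α) := hth_cont.measurable
  have hexp_cont : Continuous (fun φ : ℝ => Complex.exp (φ * Complex.I)) :=
    Complex.continuous_exp.comp (Complex.continuous_ofReal.mul continuous_const)
  have hexp_meas : Measurable (fun φ : ℝ => Complex.exp (φ * Complex.I)) := hexp_cont.measurable
  have hmob_meas : Measurable (mobius ψ α) :=
    ((measurable_id.const_mul _).add_const α).div ((measurable_id.const_mul _).const_add 1)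
  have hmono : StrictMono (th ψ α) :=
    strictMono_of_hasDerivAt_pos (fun x => hasDerivAt_th hα ψ x)
      (fun x => div_pos h1α (Complex.normSq_pos.mpr (DD_ne hα ψ x)))
  -- Step A : change of variables on ℝ
  have stepA : Measure.map (th ψ α) ((ENNReal.ofReal (2 * π))⁻¹ • volume.restrict (Ico 0 (2 * π)))
      = (volume.restrict (Ico (th ψ α 0) (th ψ α 0 + 2 * π))).withDensity p := by
    have h2 : th ψ α (2 * π) = th ψ α 0 + 2 * π := by
      have := th_periodic ψ α 0
      simpa using this
    have himg : th ψ α '' (Ico 0 (2 * π)) = Ico (th ψ α 0) (th ψ α 0 + 2 * π) := by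
      apply Subset.antisymm
      · rintro _ ⟨x, ⟨hx0, hx2⟩, rfl⟩
        exact ⟨hmono.monotone hx0, h2 ▸ hmono hx2⟩
      · have h3 := intermediate_value_Ico (le_of_lt hπ) (hth_cont.continuousOn (s := Icc 0 (2*π)))
        rw [h2] at h3
        exact h3
    ext s hs
    rw [Measure.map_apply hth_meas hs, Measure.smul_apply, Measure.restrict_apply (hth_meas hs),
      withDensity_apply _ hs, Measure.restrict_restrict hs]
    set s' : Set ℝ := th ψ α ⁻¹' s ∩ Ico 0 (2 * π) with hs'def
    have hs'meas : MeasurableSet s' := (hth_meas hs).inter measurableSet_Ico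
    have himg' : th ψ α '' s' = s ∩ Ico (th ψ α 0) (th ψ α 0 + 2 * π) := by
      rw [hs'def, Set.image_preimage_inter, himg]
    rw [← himg', lintegral_image_eq_lintegral_abs_deriv_mul' hs'meas
      (fun x _ => (hasDerivAt_th hα ψ x).hasDerivWithinAt) (hmono.injective.injOn) p]
    have hpt : ∀ x : ℝ, ENNReal.ofReal |(1 - ‖α‖ ^ 2) / Complex.normSq (DD ψ α x)|
        * p (th ψ α x) = (ENNReal.ofReal (2 * π))⁻¹ := by
      intro x
      have hns : (0:ℝ) < Complex.normSq (DD ψ α x) := Complex.normSq_pos.mpr (DD_ne hα ψ x)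
      have hd : (0:ℝ) < (1 - ‖α‖ ^ 2) / Complex.normSq (DD ψ α x) := div_pos h1α hns
      rw [abs_of_pos hd, hp_def]
      simp only
      rw [abs_exp_th_sub hα, ← ENNReal.ofReal_mul (le_of_lt hd)]
      rw [show (1 - ‖α‖ ^ 2) / Complex.normSq (DD ψ α x) *
          (1 / (2 * π) * (1 - ‖α‖ ^ 2) /
            ((1 - ‖α‖ ^ 2) ^ 2 / Complex.normSq (DD ψ α x))) = 1 / (2 * π) by
        field_simp]
      rw [one_div, ENNReal.ofReal_inv_of_pos hπ]
    rw [setLIntegral_congr_fun hs'meas (fun x _ => hpt x), setLIntegral_const,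
      mul_comm, smul_eq_mul]
  -- Step B : periodic shift via AddCircle
  set Q : AddCircle (2 * π) → ℂ :=
    (Function.Periodic.lift (f := fun φ : ℝ => Complex.exp (φ * Complex.I)) (by
      intro x
      push_cast
      rw [add_mul, Complex.exp_add, Complex.exp_two_pi_mul_I, mul_one])) with hQdef
  have hQ_cont : Continuous Q := hexp_cont.quotient_liftOn' _
  have hQ_meas : Measurable Q := hQ_cont.measurable
  have hQmk : (fun φ : ℝ => Complex.exp (φ * Complex.I)) = Q ∘ ((↑) : ℝ → AddCircle (2 * π)) :=
    rfl
  set pbar : AddCircle (2 * π) → ℝ≥0∞ := hp_per.lift with hpbar_def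
  have hpbar_cont : Continuous pbar := hp_cont.quotient_liftOn' _
  have hpbar_meas : Measurable pbar := hpbar_cont.measurable
  have hpmk : p = pbar ∘ ((↑) : ℝ → AddCircle (2 * π)) := rfl
  have hmk_meas : Measurable ((↑) : ℝ → AddCircle (2 * π)) :=
    (AddCircle.measurePreserving_mk (2 * π) 0).measurable
  have stepB : ∀ a : ℝ,
      Measure.map (fun φ : ℝ => Complex.exp (φ * Complex.I))
        ((volume.restrict (Ico a (a + 2 * π))).withDensity p)
      = Measure.map Q ((volume : Measure (AddCircle (2 * π))).withDensity pbar) := by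
    intro a
    rw [hQmk, ← Measure.map_map hQ_meas hmk_meas]
    congr 1
    rw [hpmk, map_withDensity_comp _ hmk_meas hpbar_meas]
    congr 1
    rw [restrict_Ico_eq_restrict_Ioc]
    exact (AddCircle.measurePreserving_mk (2 * π) a).map_eq
  -- Assemble
  rw [uniformCircle, Measure.map_map hmob_meas hexp_meas]
  have hcomp : mobius ψ α ∘ (fun φ : ℝ => Complex.exp (φ * Complex.I))
      = (fun φ : ℝ => Complex.exp (φ * Complex.I)) ∘ th ψ α :=
    funext fun φ => mobius_exp hα ψ φ
  rw [hcomp, ← Measure.map_map hexp_meas hth_meas, stepA, stepB (th ψ α 0)]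
  have h0 : poissonMeasure α = Measure.map (fun φ : ℝ => Complex.exp (φ * Complex.I))
      ((volume.restrict (Ico 0 (0 + 2 * π))).withDensity p) := by
    rw [poissonMeasure, zero_add, hp_def]
  rw [h0, stepB 0]
end

section
/- If z(t) on the unit circle satisfies the Riccati equation ż = i z² f(t) + i ω z + i conj(f(t)) for a continuous complex-valued function f and real ω, then |z(t)| = 1 for all t whenever |z(0)| = 1; i.e., the unit circle is invariant. -/
open Complex

theorem riccati_circle_invariant (f : ℝ → ℂ) (hf : Continuous f) (ω : ℝ) (z : ℝ → ℂ)
    (hz : ∀ t : ℝ, HasDerivAt z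
      (Complex.I * (z t) ^ 2 * f t + Complex.I * ω * z t + Complex.I * (starRingEnd ℂ) (f t)) t)
    (h0 : ‖z 0‖ = 1) :
    ∀ t : ℝ, ‖z t‖ = 1 := by
  have hzc : Continuous z := by
    apply (fun t => (hz t).differentiableAt) |> Differentiable.continuous
  set g : ℝ → ℝ := fun t => -2 * ((z t) * (f t)).im with hg
  have hgc : Continuous g := by fun_prop
  set G : ℝ → ℝ := fun t => ∫ s in (0:ℝ)..t, g s with hGdef
  have hG : ∀ t, HasDerivAt G (g t) t := fun t =>
    (hgc.integral_hasStrictDerivAt 0 t).hasDerivAt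
  set u : ℝ → ℝ := fun t => Complex.normSq (z t) - 1 with hu
  have hu' : ∀ t, HasDerivAt u (g t * u t) t := by
    intro t
    have hre : HasDerivAt (fun s => (z s).re)
        (Complex.I * (z t) ^ 2 * f t + Complex.I * ω * z t + Complex.I * (starRingEnd ℂ) (f t)).re t :=
      Complex.reCLM.hasFDerivAt.comp_hasDerivAt t (hz t)
    have him : HasDerivAt (fun s => (z s).im)
        (Complex.I * (z t) ^ 2 * f t + Complex.I * ω * z t + Complex.I * (starRingEnd ℂ) (f t)).im t :=
      Complex.imCLM.hasFDerivAt.comp_hasDerivAt t (hz t)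
    have h1 : HasDerivAt u
        (2 * (z t).re * (Complex.I * (z t) ^ 2 * f t + Complex.I * ω * z t + Complex.I * (starRingEnd ℂ) (f t)).re
        + 2 * (z t).im * (Complex.I * (z t) ^ 2 * f t + Complex.I * ω * z t + Complex.I * (starRingEnd ℂ) (f t)).im) t := by
      have := ((hre.pow 2).add (him.pow 2)).sub_const 1
      convert this using 2 with s
      · rfl
      · rfl
      · simp [hu, Complex.normSq_apply]; ring
      all_goals norm_num
    convert h1 using 1
    simp only [hg, hu, Complex.normSq_apply, Complex.add_re, Complex.add_im, Complex.mul_re,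
      Complex.mul_im, Complex.I_re, Complex.I_im, Complex.ofReal_re, Complex.ofReal_im,
      Complex.conj_re, Complex.conj_im, pow_two]
    ring
  set v : ℝ → ℝ := fun t => u t * Real.exp (-(G t)) with hv
  have hv' : ∀ t, HasDerivAt v 0 t := by
    intro t
    have he : HasDerivAt (fun s => Real.exp (-(G s))) (Real.exp (-(G t)) * (-(g t))) t :=
      (((hG t).neg).exp)
    have := (hu' t).mul he
    convert this using 1
    · rfl
    · rfl
    · rfl
    ring
  have hconst : ∀ t, v t = v 0 := by
    intro t
    exact is_const_of_deriv_eq_zero (fun s => (hv' s).differentiableAt)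
      (fun s => (hv' s).deriv) t 0
  have hu0 : u 0 = 0 := by
    simp [hu, ← Complex.sq_norm, h0]
  intro t
  have hv0 : v 0 = 0 := by simp [hv, hu0]
  have : u t = 0 := by
    have := hconst t
    rw [hv0] at this
    have hexp : Real.exp (-(G t)) ≠ 0 := Real.exp_ne_zero _
    exact (mul_eq_zero.mp this).resolve_right hexp
  simp only [hu] at this
  have hns : Complex.normSq (z t) = 1 := by linarith
  have : ‖z t‖ ^ 2 = 1 := by rw [Complex.sq_norm, hns]
  nlinarith [norm_nonneg (z t), this]
end

section
/- Let α(t), ψ(t) solve the Watanabe–Strogatz equations α̇ = i(f α² + ω α + f̄) and ψ̇ = f α + ω + f̄ ᾱ, with |α(t)| < 1, for continuous f : ℝ → ℂ and ω ∈ ℝ. Then for any w on the unit circle, z(t) = (e^{iψ(t)} w + α(t))/(1 + conj(α(t)) e^{iψ(t)} w) solves the Riccati equation ż = i z² f + i ω z + i f̄. -/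
open Complex

lemma WS_aux_real (z : ℂ) (ω : ℝ) :
    (((z + (ω : ℂ) + (starRingEnd ℂ) z).re : ℝ) : ℂ) = z + ω + (starRingEnd ℂ) z := by
  apply Complex.ext <;> simp

theorem WS_solves_riccati (f : ℝ → ℂ) (hf : Continuous f) (ω : ℝ)
    (α : ℝ → ℂ) (ψ : ℝ → ℝ)
    (hα1 : ∀ t : ℝ, ‖α t‖ < 1)
    (hα : ∀ t : ℝ, HasDerivAt α
      (Complex.I * (f t * (α t) ^ 2 + ω * α t + (starRingEnd ℂ) (f t))) t)
    (hψ : ∀ t : ℝ, HasDerivAt ψ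
      ((f t * α t + ω + (starRingEnd ℂ) (f t) * (starRingEnd ℂ) (α t)).re) t)
    (w : ℂ) (hw : ‖w‖ = 1) :
    ∀ t : ℝ, HasDerivAt
      (fun s => (Complex.exp (ψ s * Complex.I) * w + α s) /
        (1 + (starRingEnd ℂ) (α s) * Complex.exp (ψ s * Complex.I) * w))
      (Complex.I * ((Complex.exp (ψ t * Complex.I) * w + α t) /
          (1 + (starRingEnd ℂ) (α t) * Complex.exp (ψ t * Complex.I) * w)) ^ 2 * f t +
        Complex.I * ω * ((Complex.exp (ψ t * Complex.I) * w + α t) /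
          (1 + (starRingEnd ℂ) (α t) * Complex.exp (ψ t * Complex.I) * w)) +
        Complex.I * (starRingEnd ℂ) (f t)) t := by
  intro t
  have hEabs : ‖Complex.exp (ψ t * Complex.I)‖ = 1 :=
    Complex.norm_exp_ofReal_mul_I _
  -- the denominator is nonzero
  have hden : (1 : ℂ) + (starRingEnd ℂ) (α t) * Complex.exp (ψ t * Complex.I) * w ≠ 0 := by
    intro h
    have h2 : (starRingEnd ℂ) (α t) * Complex.exp (ψ t * Complex.I) * w = -1 := by
      linear_combination h
    have h1 : ‖(starRingEnd ℂ) (α t) * Complex.exp (ψ t * Complex.I) * w‖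
        = ‖α t‖ := by
      simp [map_mul, hEabs, hw]
    rw [h2] at h1
    simp at h1
    exact absurd h1.symm (ne_of_lt (hα1 t))
  -- ψ-derivative as a complex number
  have hreal : (((f t * α t + ω + (starRingEnd ℂ) (f t) * (starRingEnd ℂ) (α t)).re : ℝ) : ℂ)
      = f t * α t + ω + (starRingEnd ℂ) (f t) * (starRingEnd ℂ) (α t) := by
    rw [← map_mul]
    exact WS_aux_real (f t * α t) ω
  have hψc : HasDerivAt (fun s => ((ψ s : ℝ) : ℂ))
      (f t * α t + ω + (starRingEnd ℂ) (f t) * (starRingEnd ℂ) (α t)) t := by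
    have := (hψ t).ofReal_comp
    rwa [hreal] at this
  have hEd : HasDerivAt (fun s => Complex.exp (ψ s * Complex.I))
      (Complex.exp (ψ t * Complex.I)
        * ((f t * α t + ω + (starRingEnd ℂ) (f t) * (starRingEnd ℂ) (α t)) * Complex.I)) t :=
    (hψc.mul_const Complex.I).cexp
  have hconj : HasDerivAt (fun s => (starRingEnd ℂ) (α s))
      ((starRingEnd ℂ) (Complex.I * (f t * (α t) ^ 2 + ω * α t + (starRingEnd ℂ) (f t)))) t :=
    (hα t).star
  have hN : HasDerivAt (fun s => Complex.exp (ψ s * Complex.I) * w + α s)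
      (Complex.exp (ψ t * Complex.I)
          * ((f t * α t + ω + (starRingEnd ℂ) (f t) * (starRingEnd ℂ) (α t)) * Complex.I) * w
        + Complex.I * (f t * (α t) ^ 2 + ω * α t + (starRingEnd ℂ) (f t))) t :=
    (hEd.mul_const w).add (hα t)
  have hD : HasDerivAt
      (fun s => 1 + (starRingEnd ℂ) (α s) * Complex.exp (ψ s * Complex.I) * w)
      (((starRingEnd ℂ) (Complex.I * (f t * (α t) ^ 2 + ω * α t + (starRingEnd ℂ) (f t)))
          * Complex.exp (ψ t * Complex.I)
        + (starRingEnd ℂ) (α t) * (Complex.exp (ψ t * Complex.I)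
          * ((f t * α t + ω + (starRingEnd ℂ) (f t) * (starRingEnd ℂ) (α t)) * Complex.I))) * w)
      t :=
    ((hconj.mul hEd).mul_const w).const_add 1
  have key := hN.div hD hden
  convert key using 1
  case e'_4 => rfl
  case e'_8 => rfl
  have hca' : (starRingEnd ℂ) (Complex.I * (f t * (α t) ^ 2 + ω * α t + (starRingEnd ℂ) (f t)))
      = -Complex.I * ((starRingEnd ℂ) (f t) * ((starRingEnd ℂ) (α t)) ^ 2
        + ω * (starRingEnd ℂ) (α t) + f t) := by
    simp only [map_mul, map_add, map_pow, Complex.conj_I, Complex.conj_ofReal, Complex.conj_conj]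
  rw [hca', eq_div_iff (pow_ne_zero 2 hden)]
  have hden' : 1 + cexp (I * ↑(ψ t)) * w * (starRingEnd ℂ) (α t) ≠ 0 := by convert hden using 1; ring
  field_simp
  ring
end

section
/- If α(t) solves α̇ = i(f α² + ω α + f̄) with f : ℝ → ℂ continuous, ω ∈ ℝ, and |α(0)| < 1, then |α(t)| < 1 for all t in the interval of existence; i.e., the open unit disc is invariant under the Watanabe–Strogatz flow. -/
open Complex

theorem WS_disc_invariant (f : ℝ → ℂ) (hf : Continuous f) (ω : ℝ) (α : ℝ → ℂ)
    (hα : ∀ t : ℝ, HasDerivAt α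
      (Complex.I * (f t * (α t) ^ 2 + ω * α t + (starRingEnd ℂ) (f t))) t)
    (h0 : ‖α 0‖ < 1) :
    ∀ t : ℝ, ‖α t‖ < 1 := by
  set F : ℝ → ℝ := fun t => 2 * (f t * α t).im with hFdef
  have hαc : Continuous α := continuous_iff_continuousAt.mpr fun t => (hα t).continuousAt
  have hFc : Continuous F := by continuity
  -- derivative of normSq ∘ α
  have hu : ∀ t : ℝ, HasDerivAt (fun s => Complex.normSq (α s))
      (F t * (1 - Complex.normSq (α t))) t := by
    intro t
    have hre : HasDerivAt (fun s => (α s).re)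
        (Complex.I * (f t * (α t) ^ 2 + ω * α t + (starRingEnd ℂ) (f t))).re t :=
      Complex.reCLM.hasFDerivAt.comp_hasDerivAt t (hα t)
    have him : HasDerivAt (fun s => (α s).im)
        (Complex.I * (f t * (α t) ^ 2 + ω * α t + (starRingEnd ℂ) (f t))).im t :=
      Complex.imCLM.hasFDerivAt.comp_hasDerivAt t (hα t)
    have := (hre.mul hre).add (him.mul him)
    refine this.congr_deriv ?_
    simp only [hFdef, Complex.normSq_apply, Complex.mul_re, Complex.mul_im,
      Complex.add_re, Complex.add_im, Complex.I_re, Complex.I_im,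
      Complex.conj_re, Complex.conj_im, Complex.ofReal_re, Complex.ofReal_im,
      pow_two]
    ring
  set H : ℝ → ℝ := fun t => ∫ s in (0:ℝ)..t, F s with hHdef
  have hH : ∀ t : ℝ, HasDerivAt H (F t) t := fun t =>
    intervalIntegral.integral_hasDerivAt_right (hFc.intervalIntegrable 0 t)
      (hFc.stronglyMeasurableAtFilter _ _) hFc.continuousAt
  set w : ℝ → ℝ := fun t => (1 - Complex.normSq (α t)) * Real.exp (H t) with hwdef
  have hw : ∀ t : ℝ, HasDerivAt w 0 t := by
    intro t
    have h1 : HasDerivAt (fun s => 1 - Complex.normSq (α s))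
        (-(F t * (1 - Complex.normSq (α t)))) t := (hu t).const_sub 1
    have h2 : HasDerivAt (fun s => Real.exp (H s)) (Real.exp (H t) * F t) t :=
      (Real.hasDerivAt_exp (H t)).comp t (hH t)
    have := h1.mul h2
    refine this.congr_deriv ?_
    ring
  have hconst : ∀ t : ℝ, w t = w 0 := by
    have hdiff : Differentiable ℝ w := fun t => (hw t).differentiableAt
    intro t
    exact is_const_of_deriv_eq_zero hdiff (fun x => (hw x).deriv) t 0
  intro t
  have hpos : 0 < 1 - Complex.normSq (α t) := by
    have h1 : w t = w 0 := hconst t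
    have h2 : 0 < w 0 := by
      have : Complex.normSq (α 0) < 1 := by
        have := Complex.sq_norm (α 0)
        nlinarith [norm_nonneg (α 0)]
      have := Real.exp_pos (H 0)
      simp only [hwdef]
      nlinarith
    have h3 := Real.exp_pos (H t)
    have h4 : 0 < w t := h1 ▸ h2
    simp only [hwdef] at h4
    nlinarith
  have := Complex.sq_norm (α t)
  nlinarith [norm_nonneg (α t)]
end
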